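/- Let μ be a probability measure on ℝ, let n ≥ 1 and 1 ≤ k ≤ n, and consider the product measure μ^{⊗(n+1)} on ℝ^{n+1}, so that the coordinates X₁, …, X_{n+1} are i.i.d. with law μ. Let X_(k) denote the k-th smallest value among X₁, …, X_n. Then the probability of the event {X_{n+1} > X_(k)} is at most (n + 1 − k)/(n + 1). -/

import Mathlib

open Finset

/-- Cardinality of a filter is invariant under reindexing by a permutation. -/
lemma card_filter_perm {n : ℕ} (σ : Equiv.Perm (Fin n)) (p : Fin n → Prop) [DecidablePred p] :
    (univ.filter fun i => p (σ i)).card = (univ.filter p).card := by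
  rw [← Fintype.card_subtype, ← Fintype.card_subtype]
  exact Fintype.card_congr (σ.subtypeEquiv fun a => Iff.rfl)

lemma monotone_lt_iff_card {n : ℕ} (y : Fin n → ℝ) (hy : Monotone y) (k : ℕ)
    (hk1 : 1 ≤ k) (h : k - 1 < n) (t : ℝ) :
    y ⟨k - 1, h⟩ < t ↔ k ≤ (univ.filter fun i => y i < t).card := by
  constructor
  · intro hlt
    have hsub : Finset.Iic (⟨k - 1, h⟩ : Fin n) ⊆ univ.filter fun i => y i < t := by
      intro i hi
      simp only [mem_filter, mem_univ, true_and]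
      exact lt_of_le_of_lt (hy (Finset.mem_Iic.mp hi)) hlt
    have := Finset.card_le_card hsub
    rw [Fin.card_Iic] at this
    simp only [Fin.val_mk] at this
    omega
  · intro hcard
    by_contra hge
    push_neg at hge
    have hsub : (univ.filter fun i => y i < t) ⊆ Finset.Iio (⟨k - 1, h⟩ : Fin n) := by
      intro i hi
      simp only [mem_filter, mem_univ, true_and] at hi
      rw [Finset.mem_Iio]
      by_contra hle
      push_neg at hle
      exact absurd (hi.trans_le (hge.trans (hy hle))) (lt_irrefl _)
    have := Finset.card_le_card hsub
    rw [Fin.card_Iio] at this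
    simp only [Fin.val_mk] at this
    omega

/-- The `k`-th smallest value (1-based) among `x 0, …, x (n-1)`, obtained by
sorting the tuple in nondecreasing order. -/
noncomputable def kthSmallest {n : ℕ} (x : Fin n → ℝ) (k : ℕ) (h : k - 1 < n) : ℝ :=
  x (Tuple.sort x ⟨k - 1, h⟩)

lemma kthSmallest_lt_iff {n : ℕ} (x : Fin n → ℝ) (k : ℕ) (hk1 : 1 ≤ k)
    (h : k - 1 < n) (t : ℝ) :
    kthSmallest x k h < t ↔ k ≤ (univ.filter fun i => x i < t).card := by
  rw [kthSmallest, show x (Tuple.sort x ⟨k - 1, h⟩) = (x ∘ Tuple.sort x) ⟨k - 1, h⟩ from rfl,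
    monotone_lt_iff_card _ (Tuple.monotone_sort x) k hk1 h t,
    ← card_filter_perm (Tuple.sort x) (fun i => x i < t)]
  rfl

/-- At most `m - k` indices `j` can have at least `k` strictly smaller values. -/
lemma card_filter_card_le {m k : ℕ} (hk : k < m) (z : Fin m → ℝ) :
    (univ.filter fun j => k ≤ (univ.filter fun i => z i < z j).card).card ≤ m - k := by
  set σ := Tuple.sort z with hσ
  have hmono := Tuple.monotone_sort z
  have hcnt : ∀ r : Fin m, (univ.filter fun i => z i < z (σ r)).card ≤ r.val := by
    intro r
    rw [← card_filter_perm σ (fun i => z i < z (σ r))]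
    have hsub : (univ.filter fun s => z (σ s) < z (σ r)) ⊆ Finset.Iio r := by
      intro s hs
      simp only [mem_filter, mem_univ, true_and] at hs
      rw [Finset.mem_Iio]
      by_contra hle
      push_neg at hle
      exact absurd (hs.trans_le (hmono hle)) (lt_irrefl _)
    calc (univ.filter fun s => z (σ s) < z (σ r)).card
        ≤ (Finset.Iio r).card := Finset.card_le_card hsub
      _ = r.val := Fin.card_Iio r
  rw [← card_filter_perm σ (fun j => k ≤ (univ.filter fun i => z i < z j).card)]
  have hsub : (univ.filter fun r => k ≤ (univ.filter fun i => z i < z (σ r)).card)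
      ⊆ Finset.Ici (⟨k, hk⟩ : Fin m) := by
    intro r hr
    simp only [mem_filter, mem_univ, true_and] at hr
    rw [Finset.mem_Ici, Fin.le_def]
    exact le_trans hr (hcnt r)
  calc (univ.filter fun r => k ≤ (univ.filter fun i => z i < z (σ r)).card).card
      ≤ (Finset.Ici (⟨k, hk⟩ : Fin m)).card := Finset.card_le_card hsub
    _ = m - k := by rw [Fin.card_Ici]

open MeasureTheory
open scoped ENNReal

lemma measurable_cnt {m : ℕ} (j : Fin m) :
    Measurable fun z : Fin m → ℝ => (univ.filter fun i => z i < z j).card := by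
  simp_rw [Finset.card_filter]
  exact Finset.measurable_sum _ fun i _ =>
    Measurable.ite (measurableSet_lt (measurable_pi_apply i) (measurable_pi_apply j))
      measurable_const measurable_const

lemma measurableSet_B {m k : ℕ} (j : Fin m) :
    MeasurableSet {z : Fin m → ℝ | k ≤ (univ.filter fun i => z i < z j).card} :=
  measurableSet_le measurable_const (measurable_cnt j)

lemma measure_B_eq {m : ℕ} (μ : Measure ℝ) [IsProbabilityMeasure μ] (k : ℕ) (j j' : Fin m) :
    Measure.pi (fun _ : Fin m => μ) {z | k ≤ (univ.filter fun i => z i < z j).card}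
      = Measure.pi (fun _ : Fin m => μ) {z | k ≤ (univ.filter fun i => z i < z j').card} := by
  set τ : Equiv.Perm (Fin m) := Equiv.swap j j' with hτ
  have hmp := MeasureTheory.measurePreserving_piCongrLeft (fun _ : Fin m => μ) τ
  have hmp' := hmp.symm _
  have hpre : (MeasurableEquiv.piCongrLeft (fun _ : Fin m => ℝ) τ).symm ⁻¹'
      {z | k ≤ (univ.filter fun i => z i < z j).card}
      = {z | k ≤ (univ.filter fun i => z i < z j').card} := by
    ext z
    simp only [Set.mem_preimage, Set.mem_setOf_eq]
    have happ : ∀ i, (MeasurableEquiv.piCongrLeft (fun _ : Fin m => ℝ) τ).symm z i = z (τ i) :=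
      fun i => rfl
    simp_rw [happ]
    rw [card_filter_perm τ (fun i => z i < z (τ j))]
    have : τ j = j' := Equiv.swap_apply_left j j'
    rw [this]
  have := hmp'.measure_preimage (measurableSet_B (k := k) j).nullMeasurableSet
  rw [hpre] at this
  exact this.symm

open MeasureTheory in
/-- Order-statistic coverage bound: if `X₁, …, X_{n+1}` are i.i.d. with law
`μ`, then the probability that `X_{n+1}` strictly exceeds the `k`-th smallest
of `X₁, …, X_n` is at most `(n + 1 − k)/(n + 1)`. -/
theorem order_statistic_coverage (μ : Measure ℝ) [IsProbabilityMeasure μ]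
    (n k : ℕ) (hn : 1 ≤ n) (hk1 : 1 ≤ k) (hkn : k ≤ n) :
    (Measure.pi fun _ : Fin (n + 1) => μ)
      {z : Fin (n + 1) → ℝ |
        kthSmallest (fun i : Fin n => z i.castSucc) k (by omega) < z (Fin.last n)}
      ≤ ENNReal.ofReal (((n : ℝ) + 1 - k) / ((n : ℝ) + 1)) := by
  set P := Measure.pi fun _ : Fin (n + 1) => μ with hP
  set B : Fin (n + 1) → Set (Fin (n + 1) → ℝ) :=
    fun j => {z | k ≤ (univ.filter fun i => z i < z j).card} with hB
  -- Step 1: the event equals B (Fin.last n)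
  have hset : {z : Fin (n + 1) → ℝ |
      kthSmallest (fun i : Fin n => z i.castSucc) k (by omega) < z (Fin.last n)}
      = B (Fin.last n) := by
    ext z
    simp only [Set.mem_setOf_eq, hB]
    rw [kthSmallest_lt_iff _ k hk1 (by omega) (z (Fin.last n))]
    have : (univ.filter fun i : Fin (n + 1) => z i < z (Fin.last n)).card
        = (univ.filter fun i : Fin n => z i.castSucc < z (Fin.last n)).card := by
      rw [Finset.card_filter, Finset.card_filter, Fin.sum_univ_castSucc]
      simp
    rw [this]
  rw [hset]
  -- Step 2: all B j have the same measure
  have hBeq : ∀ j, P (B j) = P (B (Fin.last n)) := fun j => measure_B_eq μ k j (Fin.last n)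
  -- Step 3: sum of indicators bounded by n + 1 - k
  have hsum : ((n + 1 : ℕ) : ℝ≥0∞) * P (B (Fin.last n)) ≤ ((n + 1 - k : ℕ) : ℝ≥0∞) := by
    have h1 : ∑ j : Fin (n + 1), P (B j) = ((n + 1 : ℕ) : ℝ≥0∞) * P (B (Fin.last n)) := by
      simp_rw [hBeq]
      rw [Finset.sum_const, Finset.card_univ, Fintype.card_fin, nsmul_eq_mul]
    have h2 : ∑ j : Fin (n + 1), P (B j) ≤ ((n + 1 - k : ℕ) : ℝ≥0∞) := by
      have hind : ∀ j, P (B j) = ∫⁻ z, (B j).indicator (fun _ => (1 : ℝ≥0∞)) z ∂P := by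
        intro j
        rw [lintegral_indicator (measurableSet_B j)]
        simp
        rfl
      simp_rw [hind]
      rw [← lintegral_finset_sum _ fun j _ =>
        (measurable_const.indicator (measurableSet_B j))]
      have hpt : ∀ z : Fin (n + 1) → ℝ,
          ∑ j : Fin (n + 1), (B j).indicator (fun _ => (1 : ℝ≥0∞)) z
            ≤ ((n + 1 - k : ℕ) : ℝ≥0∞) := by
        intro z
        have : ∑ j : Fin (n + 1), (B j).indicator (fun _ => (1 : ℝ≥0∞)) z
            = ((univ.filter fun (j : Fin (n + 1)) =>
                k ≤ (univ.filter fun i => z i < z j).card).card : ℝ≥0∞) := by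
          simp_rw [Set.indicator_apply, hB, Set.mem_setOf_eq]
          rw [Finset.sum_boole]
        rw [this]
        exact_mod_cast Nat.cast_le.mpr (card_filter_card_le (by omega) z)
      calc ∫⁻ z, ∑ j : Fin (n + 1), (B j).indicator (fun _ => (1 : ℝ≥0∞)) z ∂P
          ≤ ∫⁻ _, ((n + 1 - k : ℕ) : ℝ≥0∞) ∂P := lintegral_mono hpt
        _ = ((n + 1 - k : ℕ) : ℝ≥0∞) := by simp
    rw [← h1]; exact h2
  -- Step 4: conclude
  have hdiv : P (B (Fin.last n)) ≤ ((n + 1 - k : ℕ) : ℝ≥0∞) / ((n + 1 : ℕ) : ℝ≥0∞) := by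
    rw [ENNReal.le_div_iff_mul_le (Or.inl (by exact_mod_cast Nat.succ_ne_zero n))
      (Or.inl (ENNReal.natCast_ne_top _))]
    rw [mul_comm]
    exact hsum
  refine hdiv.trans_eq ?_
  rw [ENNReal.ofReal_div_of_pos (by positivity)]
  congr 1
  · rw [show (n : ℝ) + 1 - k = ((n + 1 - k : ℕ) : ℝ) by
      rw [Nat.cast_sub (by omega)]; push_cast; ring]
    exact (ENNReal.ofReal_natCast _).symm
  · rw [show (n : ℝ) + 1 = ((n + 1 : ℕ) : ℝ) by push_cast; ring]
    exact (ENNReal.ofReal_natCast _).symm
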